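/- Let E be a locally cartesian closed category and P : E/I → E/J a functor that is polynomial (isomorphic to P_{f,g,h} for some polynomial (f,g,h) from I to J). Then for any object K ∈ E/I, the sliced functor P/K : E/K ≅ (E/I)/K → (E/J)/PK ≅ E/PK, sending an object X → K to PX → PK, is polynomial, i.e. belongs to Poly(K, PK). -/

import Mathlib

open CategoryTheory CategoryTheory.Limits

universe v u

variable {E : Type u} [Category.{v} E]

/-- A category with finite limits is locally cartesian closed if every pullback functor
`f* : E/J ⥤ E/I` has a right adjoint (pushforward). -/
def IsLCC (E : Type u) [Category.{v} E] [HasFiniteLimits E] : Prop :=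
  ∀ ⦃I J : E⦄ (f : I ⟶ J), (Over.pullback f).IsLeftAdjoint

/-- A functor `E/I ⥤ E/J` is polynomial if it is isomorphic to `f_! ∘ g_* ∘ h*` for some
polynomial `I ←h– A –g→ B –f→ J`. -/
def IsPolynomial [HasFiniteLimits E] {I J : E} (P : Over I ⥤ Over J) : Prop :=
  ∃ (A B : E) (h : A ⟶ I) (g : A ⟶ B) (f : B ⟶ J) (gStar : Over A ⥤ Over B),
    Nonempty (Over.pullback g ⊣ gStar) ∧
      Nonempty (P ≅ Over.pullback h ⋙ gStar ⋙ Over.map f)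

/-- The sliced functor `P/K : E/K ⥤ E/PK` of `P : E/I ⥤ E/J` at `K ∈ E/I`, sending
`X → K` to `PX → PK`, obtained via the iterated slice equivalences
`E/K ≅ (E/I)/K` and `(E/J)/PK ≅ E/PK`. -/
def sliceFunctor {I J : E} (P : Over I ⥤ Over J) (K : Over I) :
    Over K.left ⥤ Over (P.obj K).left :=
  (Over.iteratedSliceEquiv K).inverse ⋙ Over.post P ⋙
    (Over.iteratedSliceEquiv (P.obj K)).functor

/-- If `F ⊣ U`, then the induced functor `Over.post U : Over Q ⥤ Over (U.obj Q)` has a left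
adjoint given by applying `F` and composing with the counit. -/
noncomputable def postAdjunction {C : Type*} {D : Type*} [Category C] [Category D]
    {F : C ⥤ D} {U : D ⥤ C} (adj : F ⊣ U) (Q : D) :
    Over.post (X := U.obj Q) F ⋙ Over.map (adj.counit.app Q) ⊣ Over.post U :=
  Adjunction.mkOfHomEquiv
    { homEquiv := fun Y X =>
        { toFun := fun u => Over.homMk ((adj.homEquiv _ _) u.left) (by
            have key : ∀ ul : F.obj Y.left ⟶ X.left, ul ≫ X.hom = F.map Y.hom ≫ adj.counit.app Q →
                adj.homEquiv _ _ ul ≫ U.map X.hom = Y.hom := by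
              intro ul hu
              rw [Adjunction.homEquiv_unit, Category.assoc, ← U.map_comp, hu, U.map_comp,
                ← Category.assoc]
              have hn := adj.unit.naturality Y.hom
              dsimp at hn
              rw [← hn, Category.assoc]
              simp
            exact key _ (Over.w u))
          invFun := fun v => Over.homMk ((adj.homEquiv _ _).symm v.left) (by
            have key : ∀ vl : Y.left ⟶ U.obj X.left, vl ≫ U.map X.hom = Y.hom →
                (adj.homEquiv _ _).symm vl ≫ X.hom = F.map Y.hom ≫ adj.counit.app Q := by
              intro vl hv
              rw [Adjunction.homEquiv_counit, Category.assoc]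
              have hn := adj.counit.naturality X.hom
              dsimp at hn
              rw [← hn, ← Category.assoc, ← F.map_comp, hv]
            exact key _ (Over.w v))
          left_inv := fun u => by ext; exact (adj.homEquiv _ _).symm_apply_apply _
          right_inv := fun v => by ext; exact (adj.homEquiv _ _).apply_symm_apply _ }
      homEquiv_naturality_left_symm := fun {Y' Y X} m u => by
        ext
        exact adj.homEquiv_naturality_left_symm _ _
      homEquiv_naturality_right := fun {Y X X'} u m => by
        ext
        exact adj.homEquiv_naturality_right _ _ }

/-- The iterated slice equivalence commutes with `Over.map`. -/
def sliceMapComm {C : Type*} [Category C] {X : C} {Z₁ Z₂ : Over X} (m : Z₁ ⟶ Z₂) :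
    Over.map m ⋙ (Over.iteratedSliceEquiv Z₂).functor ≅
      (Over.iteratedSliceEquiv Z₁).functor ⋙ Over.map m.left :=
  NatIso.ofComponents (fun Y => Over.isoMk (Iso.refl _) (by simp; exact Category.id_comp _))
    (by intros; ext; exact (Category.comp_id _).trans (Category.id_comp _).symm)

/-- The slice of `Over.map f` at `L` is (isomorphic to) the identity functor. -/
def sliceOfMap {C : Type*} [Category C] {B J : C} (f : B ⟶ J) (L : Over B) :
    (Over.iteratedSliceEquiv L).inverse ⋙ Over.post (Over.map f) ⋙
      (Over.iteratedSliceEquiv ((Over.map f).obj L)).functor ≅ 𝟭 (Over L.left) :=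
  NatIso.ofComponents (fun Y => Over.isoMk (Iso.refl _) (by simp; exact Category.id_comp _))
    (by intros; ext; exact (Category.comp_id _).trans (Category.id_comp _).symm)

/-- The slice of `Over.pullback h` at `K` is pullback along the first projection. -/
noncomputable def sliceOfPullback {C : Type*} [Category C] [HasPullbacks C] {A I : C}
    (h : A ⟶ I) (K : Over I) :
    (Over.iteratedSliceEquiv K).inverse ⋙ Over.post (Over.pullback h) ⋙
      (Over.iteratedSliceEquiv ((Over.pullback h).obj K)).functor ≅
      Over.pullback (pullback.fst K.hom h) :=
  NatIso.ofComponents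
    (fun X => Over.isoMk (pullbackRightPullbackFstIso K.hom h X.hom).symm (by
      dsimp
      apply pullback.hom_ext
      · simp [Over.iteratedSliceEquiv, Over.iteratedSliceForward, Over.iteratedSliceBackward, Over.post]
        exact (pullback.lift_fst _ _ _).symm
      · simp [Over.iteratedSliceEquiv, Over.iteratedSliceForward, Over.iteratedSliceBackward, Over.post]
        exact (pullback.lift_snd _ _ _).symm))
    (by
      intro X Y u
      ext
      dsimp
      show pullback.lift (f := Y.hom ≫ K.hom) (g := h) (pullback.fst (X.hom ≫ K.hom) h ≫ u.left)
            (pullback.snd (X.hom ≫ K.hom) h) (by simp [pullback.condition]) ≫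
          (pullbackRightPullbackFstIso K.hom h Y.hom).inv =
        (pullbackRightPullbackFstIso K.hom h X.hom).inv ≫
          pullback.lift (f := Y.hom) (g := pullback.fst K.hom h)
            (pullback.fst X.hom (pullback.fst K.hom h) ≫ u.left)
            (pullback.snd X.hom (pullback.fst K.hom h)) (by simp [pullback.condition])
      apply pullback.hom_ext
      · simp
        erw [pullback.lift_fst, pullback.lift_fst, pullbackRightPullbackFstIso_inv_fst_assoc]
      · apply pullback.hom_ext <;> simp
        · erw [pullback.lift_fst_assoc, pullback.lift_snd_assoc]
          simp
        · erw [pullback.lift_snd, pullback.lift_snd_assoc]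
          simp)

/-- Transport `Over.post` along a natural isomorphism. -/
def postIsoOfIso {C D : Type*} [Category C] [Category D] {F G : C ⥤ D} (e : F ≅ G) (X : C) :
    Over.post (X := X) F ≅ Over.post G ⋙ Over.map (e.inv.app X) :=
  NatIso.ofComponents
    (fun Y => Over.isoMk (e.app Y.left) (by
      have := e.hom.naturality Y.hom
      show e.hom.app Y.left ≫ G.map Y.hom ≫ e.inv.app X = F.map Y.hom
      rw [← Category.assoc, ← this]
      simp))
    (by intro Y Z u; ext; exact e.hom.naturality u.left)

/-- in a locally cartesian closed category, if `P : E/I ⥤ E/J` is polynomial,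
then for every `K ∈ E/I` the sliced functor `P/K : E/K ⥤ E/PK` is polynomial. -/
theorem polynomial_slice [HasFiniteLimits E] (hlcc : IsLCC E) {I J : E}
    (P : Over I ⥤ Over J) (hP : IsPolynomial P) (K : Over I) :
    IsPolynomial (sliceFunctor P K) := by
  obtain ⟨A, B, h, g, f, gStar, ⟨adj⟩, ⟨e⟩⟩ := hP
  -- notation
  let Q : Over A := (Over.pullback h).obj K
  let NO : Over B := gStar.obj Q
  let R : Over A := (Over.pullback g).obj NO
  let ε : R ⟶ Q := adj.counit.app Q
  let g' : R.left ⟶ NO.left := pullback.fst NO.hom g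
  let π : Q.left ⟶ K.left := pullback.fst K.hom h
  let w : NO.left ⟶ (P.obj K).left := (e.inv.app K).left
  obtain ⟨gStar', ⟨adj'⟩⟩ := (hlcc g').exists_rightAdjoint
  refine ⟨R.left, NO.left, ε.left ≫ π, g', w, gStar', ⟨adj'⟩, ⟨?_⟩⟩
  -- the sliced middle functor
  let G : Over Q.left ⥤ Over NO.left :=
    (Over.iteratedSliceEquiv Q).inverse ⋙ Over.post gStar ⋙
      (Over.iteratedSliceEquiv NO).functor
  -- G is right adjoint to `Over.pullback g' ⋙ Over.map ε.left`
  let adjG : ((Over.iteratedSliceEquiv NO).inverse ⋙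
      (Over.post (Over.pullback g) ⋙ Over.map ε) ⋙ (Over.iteratedSliceEquiv Q).functor) ⊣ G :=
    ((((Over.iteratedSliceEquiv NO).symm.toAdjunction).comp (postAdjunction adj Q)).comp
      (Over.iteratedSliceEquiv Q).toAdjunction)
  let LLIso : ((Over.iteratedSliceEquiv NO).inverse ⋙
      (Over.post (Over.pullback g) ⋙ Over.map ε) ⋙ (Over.iteratedSliceEquiv Q).functor) ≅
      Over.pullback g' ⋙ Over.map ε.left :=
    Functor.isoWhiskerLeft ((Over.iteratedSliceEquiv NO).inverse ⋙ Over.post (Over.pullback g))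
        (sliceMapComm ε) ≪≫
      Functor.isoWhiskerRight (sliceOfPullback g NO) (Over.map ε.left)
  let adjL : (Over.pullback g' ⋙ Over.map ε.left) ⊣ G := adjG.ofNatIsoLeft LLIso
  let adjR : (Over.pullback g' ⋙ Over.map ε.left) ⊣ (Over.pullback ε.left ⋙ gStar') :=
    adj'.comp (Over.mapPullbackAdj ε.left)
  let GIso : G ≅ Over.pullback ε.left ⋙ gStar' := adjL.rightAdjointUniq adjR
  -- assemble
  let P₀ : Over I ⥤ Over J := Over.pullback h ⋙ gStar ⋙ Over.map f
  let Rest1 : Over Q ⥤ Over (P.obj K).left :=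
    Over.post gStar ⋙ Over.post (Over.map f) ⋙
      (Over.iteratedSliceEquiv (P₀.obj K)).functor ⋙ Over.map w
  let Rest2 : Over NO ⥤ Over (P.obj K).left :=
    Over.post (Over.map f) ⋙ (Over.iteratedSliceEquiv (P₀.obj K)).functor ⋙ Over.map w
  exact
    Functor.isoWhiskerLeft (Over.iteratedSliceEquiv K).inverse
        (Functor.isoWhiskerRight (postIsoOfIso e K) (Over.iteratedSliceEquiv (P.obj K)).functor) ≪≫
    Functor.isoWhiskerLeft ((Over.iteratedSliceEquiv K).inverse ⋙ Over.post P₀)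
        (sliceMapComm (e.inv.app K)) ≪≫
    Functor.isoWhiskerLeft ((Over.iteratedSliceEquiv K).inverse ⋙ Over.post (Over.pullback h))
        (Functor.isoWhiskerRight (Over.iteratedSliceEquiv Q).unitIso Rest1) ≪≫
    Functor.isoWhiskerRight (sliceOfPullback h K) ((Over.iteratedSliceEquiv Q).inverse ⋙ Rest1) ≪≫
    Functor.isoWhiskerLeft (Over.pullback π)
      (Functor.isoWhiskerLeft ((Over.iteratedSliceEquiv Q).inverse ⋙ Over.post gStar)
        (Functor.isoWhiskerRight (Over.iteratedSliceEquiv NO).unitIso Rest2)) ≪≫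
    Functor.isoWhiskerLeft (Over.pullback π ⋙ G) (Functor.isoWhiskerRight (sliceOfMap f NO) (Over.map w)) ≪≫
    Functor.isoWhiskerLeft (Over.pullback π) (Functor.isoWhiskerRight GIso (Over.map w)) ≪≫
    Functor.isoWhiskerRight (Over.pullbackComp ε.left π).symm (gStar' ⋙ Over.map w)
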